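/- arXiv:2408.13997 — 3 statements merged into one kernel-verified Lean document; each statement's English description precedes it below -/
import Mathlib

section
/- Let n and m be natural numbers with n + m ≥ 1, and let f₁, …, fₙ and h₁, …, hₘ be holomorphic functions on the open unit disk {z ∈ ℂ : |z| < 1}. If ∑_{j=1}^{n} |f_j(z)|² = ∑_{k=1}^{m} |h_k(z)|² for every z in the open unit disk, then the family of functions f₁, …, fₙ, h₁, …, hₘ, regarded as ℂ-valued functions on the open unit disk, is linearly dependent over ℂ. -/
open Metric Filter Complex Topology

/-- If `f` is complex-differentiable at `conj z`, then `w ↦ conj (f (conj w))` is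
complex-differentiable at `z`. -/
private lemma conjconj_diffAt {f : ℂ → ℂ} {z : ℂ}
    (hf : DifferentiableAt ℂ f ((starRingEnd ℂ) z)) :
    DifferentiableAt ℂ (fun w => (starRingEnd ℂ) (f ((starRingEnd ℂ) w))) z := by
  have hd := hf.hasDerivAt
  set d := deriv f ((starRingEnd ℂ) z) with hdd
  rw [hasDerivAt_iff_tendsto_slope] at hd
  have key : HasDerivAt (fun w => (starRingEnd ℂ) (f ((starRingEnd ℂ) w)))
      ((starRingEnd ℂ) d) z := by
    rw [hasDerivAt_iff_tendsto_slope]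
    have h1 : Tendsto (starRingEnd ℂ) (𝓝[≠] z) (𝓝[≠] ((starRingEnd ℂ) z)) := by
      rw [tendsto_nhdsWithin_iff]
      constructor
      · exact (Complex.continuous_conj.tendsto z).mono_left nhdsWithin_le_nhds
      · filter_upwards [self_mem_nhdsWithin] with w hw
        simp only [Set.mem_compl_iff, Set.mem_singleton_iff] at hw ⊢
        exact fun hc => hw (by simpa using congrArg (starRingEnd ℂ) hc)
    have h2 : Tendsto
        (fun w => (starRingEnd ℂ) (slope f ((starRingEnd ℂ) z) ((starRingEnd ℂ) w)))
        (𝓝[≠] z) (𝓝 ((starRingEnd ℂ) d)) :=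
      (Complex.continuous_conj.tendsto d).comp (hd.comp h1)
    refine h2.congr fun w => ?_
    simp [slope, smul_eq_mul, map_mul, map_inv₀, map_sub]
  exact key.differentiableAt

/-- Identity theorem: vanishing on a subball implies vanishing on the ball. -/
private lemma eqOn_zero_of_ball {F : ℂ → ℂ} {r R : ℝ} (hr : 0 < r) (hrR : r ≤ R)
    (hF : ∀ z ∈ ball (0:ℂ) R, DifferentiableAt ℂ F z)
    (h0 : ∀ z ∈ ball (0:ℂ) r, F z = 0) : ∀ z ∈ ball (0:ℂ) R, F z = 0 := by
  have hA : AnalyticOnNhd ℂ F (ball (0:ℂ) R) :=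
    DifferentiableOn.analyticOnNhd (fun z hz => (hF z hz).differentiableWithinAt) isOpen_ball
  have h0mem : (0:ℂ) ∈ ball (0:ℂ) R := by
    simpa using lt_of_lt_of_le hr hrR
  have hev : F =ᶠ[𝓝 (0:ℂ)] 0 :=
    Filter.eventually_of_mem (Metric.ball_mem_nhds 0 hr) h0
  exact fun z hz => hA.eqOn_zero_of_preconnected_of_eventuallyEq_zero
    (convex_ball _ _).isPreconnected h0mem hev hz

/-- Identity theorem: vanishing at small real points implies vanishing on the ball. -/
private lemma eqOn_zero_of_real {F : ℂ → ℂ} {r : ℝ} (hr : 0 < r)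
    (hF : ∀ z ∈ ball (0:ℂ) r, DifferentiableAt ℂ F z)
    (h0 : ∀ x : ℝ, |x| < r → F x = 0) : ∀ z ∈ ball (0:ℂ) r, F z = 0 := by
  have hA : AnalyticOnNhd ℂ F (ball (0:ℂ) r) :=
    DifferentiableOn.analyticOnNhd (fun z hz => (hF z hz).differentiableWithinAt) isOpen_ball
  have h0mem : (0:ℂ) ∈ ball (0:ℂ) r := by simpa using hr
  have hfreq : ∃ᶠ z in 𝓝[≠] (0:ℂ), F z = 0 := by
    have hseq : Tendsto (fun k : ℕ => ((r / (k + 2) : ℝ) : ℂ)) atTop (𝓝[≠] (0:ℂ)) := by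
      rw [tendsto_nhdsWithin_iff]
      constructor
      · have hreal : Tendsto (fun k : ℕ => (r / (k + 2) : ℝ)) atTop (𝓝 0) := by
          apply Tendsto.div_atTop (tendsto_const_nhds (x := r))
          exact tendsto_atTop_add_const_right _ 2 tendsto_natCast_atTop_atTop
        have := (Complex.continuous_ofReal.tendsto 0).comp hreal
        simpa [Function.comp_def] using this
      · filter_upwards with k
        simp only [Set.mem_compl_iff, Set.mem_singleton_iff, Complex.ofReal_eq_zero]
        exact div_ne_zero hr.ne' (by positivity)
    apply hseq.frequently
    apply Filter.Frequently.of_forall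
    intro k
    apply h0
    rw [abs_of_pos (by positivity)]
    refine div_lt_self hr ?_
    have := Nat.cast_nonneg (α := ℝ) k
    linarith
  exact fun z hz => (hA.eqOn_zero_of_preconnected_of_frequently_eq_zero
    (convex_ball _ _).isPreconnected h0mem hfreq) hz

/-- If `f₁,…,fₙ` and `h₁,…,hₘ` are holomorphic on the open unit disk with
`∑ |f_j|² = ∑ |h_k|²` there, and `n + m ≥ 1`, then the family `f₁,…,fₙ,h₁,…,hₘ`
(restricted to the disk) is linearly dependent over `ℂ`. -/
theorem stmt0 (n m : ℕ) (hnm : 1 ≤ n + m)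
    (f : Fin n → ℂ → ℂ) (h : Fin m → ℂ → ℂ)
    (hf : ∀ j, DifferentiableOn ℂ (f j) (Metric.ball (0 : ℂ) 1))
    (hh : ∀ k, DifferentiableOn ℂ (h k) (Metric.ball (0 : ℂ) 1))
    (heq : ∀ z ∈ Metric.ball (0 : ℂ) 1,
      ∑ j, ‖f j z‖ ^ 2 = ∑ k, ‖h k z‖ ^ 2) :
    ¬ LinearIndependent ℂ
      (fun i : Fin n ⊕ Fin m => fun z : Metric.ball (0 : ℂ) 1 =>
        Sum.elim (fun j => f j z.1) (fun k => h k z.1) i) := by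
  intro hli
  -- conjugated holomorphic companions
  set fc : Fin n → ℂ → ℂ :=
    fun j w => (starRingEnd ℂ) (f j ((starRingEnd ℂ) w)) with hfc_def
  set hc : Fin m → ℂ → ℂ :=
    fun k w => (starRingEnd ℂ) (h k ((starRingEnd ℂ) w)) with hhc_def
  have hmem_conj : ∀ {w : ℂ} {r : ℝ}, w ∈ ball (0:ℂ) r → (starRingEnd ℂ) w ∈ ball (0:ℂ) r := by
    intro w r hw
    rw [mem_ball_zero_iff] at hw ⊢
    simpa using hw
  have hfd : ∀ j, ∀ z ∈ ball (0:ℂ) 1, DifferentiableAt ℂ (f j) z :=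
    fun j z hz => (hf j).differentiableAt (isOpen_ball.mem_nhds hz)
  have hhd : ∀ k, ∀ z ∈ ball (0:ℂ) 1, DifferentiableAt ℂ (h k) z :=
    fun k z hz => (hh k).differentiableAt (isOpen_ball.mem_nhds hz)
  have hfcd : ∀ j, ∀ z ∈ ball (0:ℂ) 1, DifferentiableAt ℂ (fc j) z :=
    fun j z hz => conjconj_diffAt (hfd j _ (hmem_conj hz))
  have hhcd : ∀ k, ∀ z ∈ ball (0:ℂ) 1, DifferentiableAt ℂ (hc k) z :=
    fun k z hz => conjconj_diffAt (hhd k _ (hmem_conj hz))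
  set G : ℂ → ℂ → ℂ :=
    fun z w => (∑ j, f j z * fc j w) - ∑ k, h k z * hc k w with hG_def
  -- differentiability of composites
  have hGdiff : ∀ (φ ψ : ℂ → ℂ) (z : ℂ), DifferentiableAt ℂ φ z → DifferentiableAt ℂ ψ z →
      φ z ∈ ball (0:ℂ) 1 → ψ z ∈ ball (0:ℂ) 1 →
      DifferentiableAt ℂ (fun u => G (φ u) (ψ u)) z := by
    intro φ ψ z hφ hψ h1 h2
    simp only [hG_def]
    apply DifferentiableAt.sub
    · refine DifferentiableAt.fun_sum fun j _ => DifferentiableAt.mul ?_ ?_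
      · exact (hfd j _ h1).comp z hφ
      · exact (hfcd j _ h2).comp z hψ
    · refine DifferentiableAt.fun_sum fun k _ => DifferentiableAt.mul ?_ ?_
      · exact (hhd k _ h1).comp z hφ
      · exact (hhcd k _ h2).comp z hψ
  -- vanishing on the anti-diagonal
  have hdiag : ∀ z ∈ ball (0:ℂ) 1, G z ((starRingEnd ℂ) z) = 0 := by
    intro z hz
    have e1 : (∑ j, f j z * fc j ((starRingEnd ℂ) z))
        = ((∑ j, Complex.normSq (f j z) : ℝ) : ℂ) := by
      push_cast
      refine Finset.sum_congr rfl fun j _ => ?_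
      simp [hfc_def, Complex.mul_conj]
    have e2 : (∑ k, h k z * hc k ((starRingEnd ℂ) z))
        = ((∑ k, Complex.normSq (h k z) : ℝ) : ℂ) := by
      push_cast
      refine Finset.sum_congr rfl fun k _ => ?_
      simp [hhc_def, Complex.mul_conj]
    have e3 : (∑ j, Complex.normSq (f j z)) = ∑ k, Complex.normSq (h k z) := by
      have := heq z hz
      simpa [← Complex.sq_norm] using this
    simp only [hG_def]
    rw [e1, e2, e3, sub_self]
  -- norm helpers
  have hmem2 : ∀ (u v : ℂ), u ∈ ball (0:ℂ) (1/2) → v ∈ ball (0:ℂ) (1/2) →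
      (u + v * Complex.I) ∈ ball (0:ℂ) 1 ∧ (u - v * Complex.I) ∈ ball (0:ℂ) 1 := by
    intro u v hu hv
    rw [mem_ball_zero_iff] at hu hv
    have hvI : ‖v * Complex.I‖ = ‖v‖ := by simp
    constructor <;> rw [mem_ball_zero_iff]
    · calc ‖u + v * Complex.I‖ ≤ ‖u‖ + ‖v * Complex.I‖ := norm_add_le _ _
        _ < 1 := by rw [hvI]; linarith
    · calc ‖u - v * Complex.I‖ ≤ ‖u‖ + ‖v * Complex.I‖ := norm_sub_le _ _
        _ < 1 := by rw [hvI]; linarith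
  have hrealmem : ∀ v : ℝ, |v| < 1/2 → ((v : ℂ)) ∈ ball (0:ℂ) (1/2) := by
    intro v hv
    rw [mem_ball_zero_iff]
    simpa using hv
  -- Step A: for fixed small real v, the function u ↦ G (u+vI) (u−vI) vanishes on ball 1/2
  have stepA : ∀ v : ℝ, |v| < 1/2 → ∀ u ∈ ball (0:ℂ) (1/2),
      G (u + v * Complex.I) (u - v * Complex.I) = 0 := by
    intro v hv
    refine eqOn_zero_of_real
      (F := fun u => G (u + (v:ℂ) * Complex.I) (u - (v:ℂ) * Complex.I)) (by norm_num) ?_ ?_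
    · intro u hu
      obtain ⟨m1, m2⟩ := hmem2 u v hu (hrealmem v hv)
      exact hGdiff (fun u => u + (v:ℂ) * Complex.I) (fun u => u - (v:ℂ) * Complex.I) u
        (by fun_prop) (by fun_prop) m1 m2
    · intro x hx
      obtain ⟨m1, m2⟩ := hmem2 x v (hrealmem x hx) (hrealmem v hv)
      have hconj : (starRingEnd ℂ) ((x:ℂ) + v * Complex.I) = (x:ℂ) - v * Complex.I := by
        simp [map_add, map_mul, Complex.conj_ofReal, Complex.conj_I]
        ring
      have := hdiag ((x:ℂ) + v * Complex.I) m1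
      rwa [hconj] at this
  -- Step B: for fixed small complex u, vanishing in complex v
  have stepB : ∀ u ∈ ball (0:ℂ) (1/2), ∀ v ∈ ball (0:ℂ) (1/2),
      G (u + v * Complex.I) (u - v * Complex.I) = 0 := by
    intro u hu
    refine eqOn_zero_of_real
      (F := fun v => G (u + v * Complex.I) (u - v * Complex.I)) (by norm_num) ?_ ?_
    · intro v hv
      obtain ⟨m1, m2⟩ := hmem2 u v hu hv
      exact hGdiff (fun v => u + v * Complex.I) (fun v => u - v * Complex.I) v
        (by fun_prop) (by fun_prop) m1 m2
    · intro x hx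
      exact stepA x hx u hu
  -- Step C: G vanishes on ball(1/2) × ball(1/2)
  have hG0 : ∀ z ∈ ball (0:ℂ) (1/2), ∀ w ∈ ball (0:ℂ) (1/2), G z w = 0 := by
    intro z hz w hw
    rw [mem_ball_zero_iff] at hz hw
    have hu : (z + w)/2 ∈ ball (0:ℂ) (1/2) := by
      rw [mem_ball_zero_iff]
      calc ‖(z + w)/2‖ = ‖z + w‖/2 := by rw [norm_div]; norm_num
        _ ≤ (‖z‖ + ‖w‖)/2 := by gcongr; exact norm_add_le _ _
        _ < 1/2 := by linarith
    have hv : (w - z) * Complex.I / 2 ∈ ball (0:ℂ) (1/2) := by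
      rw [mem_ball_zero_iff]
      calc ‖(w - z) * Complex.I / 2‖ = ‖w - z‖/2 := by
            rw [norm_div, norm_mul]; norm_num
        _ ≤ (‖w‖ + ‖z‖)/2 := by gcongr; exact norm_sub_le _ _
        _ < 1/2 := by linarith
    have hB := stepB _ hu _ hv
    have e1 : (z + w)/2 + ((w - z) * Complex.I / 2) * Complex.I = z := by
      linear_combination ((w - z)/2) * Complex.I_mul_I
    have e2 : (z + w)/2 - ((w - z) * Complex.I / 2) * Complex.I = w := by
      linear_combination (-(w - z)/2) * Complex.I_mul_I
    rwa [e1, e2] at hB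
  -- Step D: extend in z to the whole disk
  have hG1 : ∀ w ∈ ball (0:ℂ) (1/2), ∀ z ∈ ball (0:ℂ) 1, G z w = 0 := by
    intro w hw
    have hw1 : w ∈ ball (0:ℂ) 1 := ball_subset_ball (by norm_num) hw
    refine eqOn_zero_of_ball (F := fun z => G z w) (r := 1/2) (by norm_num) (by norm_num) ?_ ?_
    · intro z hz
      exact hGdiff (fun u => u) (fun _ => w) z differentiableAt_fun_id (differentiableAt_const w)
        hz hw1
    · intro z hz
      exact hG0 z hz w hw
  -- use linear independence to kill the coefficients
  rw [Fintype.linearIndependent_iff] at hli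
  have hcoef : ∀ w ∈ ball (0:ℂ) (1/2), (∀ j, fc j w = 0) ∧ (∀ k, hc k w = 0) := by
    intro w hw
    have hrel := hli (Sum.elim (fun j => fc j w) (fun k => - hc k w)) ?_
    · refine ⟨fun j => hrel (Sum.inl j), fun k => ?_⟩
      have := hrel (Sum.inr k)
      simpa [neg_eq_zero] using this
    · funext z
      simp only [Finset.sum_apply, Pi.smul_apply, Pi.zero_apply, smul_eq_mul,
        Fintype.sum_sum_type, Sum.elim_inl, Sum.elim_inr]
      have hg := hG1 w hw z.1 z.2
      simp only [hG_def] at hg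
      have e1 : ∑ j, fc j w * f j z.1 = ∑ j, f j z.1 * fc j w :=
        Finset.sum_congr rfl fun j _ => mul_comm _ _
      have e2 : ∑ k, (-(hc k w)) * h k z.1 = -∑ k, h k z.1 * hc k w := by
        rw [← Finset.sum_neg_distrib]
        exact Finset.sum_congr rfl fun k _ => by ring
      rw [e1, e2, ← sub_eq_add_neg]
      exact hg
  -- all the functions vanish identically
  have hfz : ∀ j, ∀ z ∈ ball (0:ℂ) 1, f j z = 0 := by
    intro j
    refine eqOn_zero_of_ball (F := f j) (r := 1/2) (by norm_num) (by norm_num)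
      (fun z hz => hfd j z hz) ?_
    intro z hz
    have h1 := (hcoef ((starRingEnd ℂ) z) (hmem_conj hz)).1 j
    simp only [hfc_def, Complex.conj_conj] at h1
    simpa using congrArg (starRingEnd ℂ) h1
  have hhz : ∀ k, ∀ z ∈ ball (0:ℂ) 1, h k z = 0 := by
    intro k
    refine eqOn_zero_of_ball (F := h k) (r := 1/2) (by norm_num) (by norm_num)
      (fun z hz => hhd k z hz) ?_
    intro z hz
    have h1 := (hcoef ((starRingEnd ℂ) z) (hmem_conj hz)).2 k
    simp only [hhc_def, Complex.conj_conj] at h1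
    simpa using congrArg (starRingEnd ℂ) h1
  -- contradiction: the (nonempty) family of zero functions would be independent
  have i0 : Fin n ⊕ Fin m :=
    if hn : 0 < n then Sum.inl ⟨0, hn⟩ else Sum.inr ⟨0, by omega⟩
  have hone := hli (fun _ => 1) ?_ i0
  · exact one_ne_zero hone
  · funext z
    simp only [Finset.sum_apply, Pi.smul_apply, Pi.zero_apply, one_smul,
      Fintype.sum_sum_type, Sum.elim_inl, Sum.elim_inr]
    rw [Finset.sum_eq_zero (fun j _ => hfz j z.1 z.2),
      Finset.sum_eq_zero (fun k _ => hhz k z.1 z.2), add_zero]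
end

section
/- Let c : ℕ × ℕ → ℂ. Suppose that for every z in the open unit disk {z ∈ ℂ : |z| < 1} the family (r,s) ↦ c(r,s)·z^r·(conj z)^s is summable and its sum ∑_{r,s} c(r,s) z^r (conj z)^s equals 0. Then c(r,s) = 0 for all r and s. -/
open Complex MeasureTheory Filter Set
open scoped NNReal ENNReal

/-- Orthogonality of characters on the circle. -/
lemma orth_aux (m : ℤ) :
    (∫ θ in (0:ℝ)..(2*Real.pi), Complex.exp (m * θ * Complex.I)) =
      if m = 0 then ((2*Real.pi : ℝ) : ℂ) else 0 := by
  rcases eq_or_ne m 0 with h | h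
  · simp [h]
  · rw [if_neg h]
    have hrw : ∀ θ : ℝ, (m : ℂ) * θ * Complex.I = (m * Complex.I) * θ := fun θ => by ring
    simp_rw [hrw]
    rw [integral_exp_mul_complex (by simp [h, Complex.I_ne_zero])]
    have h1 : (m:ℂ) * Complex.I * ((2:ℝ)*Real.pi : ℝ) = m * (2 * (Real.pi:ℂ) * Complex.I) := by
      push_cast; ring
    rw [h1, Complex.exp_int_mul_two_pi_mul_I]
    simp

lemma norm_exp_ofReal_mul_I' (x : ℝ) : ‖Complex.exp ((x:ℂ) * Complex.I)‖ = 1 := by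
  rw [Complex.norm_exp_ofReal_mul_I]

lemma norm_exp_int_mul_I' (m : ℤ) (θ : ℝ) :
    ‖Complex.exp ((m:ℂ) * (θ:ℂ) * Complex.I)‖ = 1 := by
  have h : ((m:ℂ) * (θ:ℂ) * Complex.I) = (((m:ℝ) * θ : ℝ):ℂ) * Complex.I := by push_cast; ring
  rw [h, norm_exp_ofReal_mul_I']

/-- Uniqueness of absolutely convergent one-variable power series vanishing on `(0,1) ⊆ ℝ`. -/
lemma lemA (a : ℕ → ℂ)
    (hs : ∀ t : ℝ, t ∈ Set.Ioo (0:ℝ) 1 → Summable (fun k => a k * (t:ℂ)^k))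
    (hz : ∀ t : ℝ, t ∈ Set.Ioo (0:ℝ) 1 → ∑' k, a k * (t:ℂ)^k = 0) :
    ∀ k, a k = 0 := by
  set p := FormalMultilinearSeries.ofScalars ℂ a with hp
  have hpn : ∀ n, ‖p n‖ = ‖a n‖ := fun n => FormalMultilinearSeries.ofScalars_norm ℂ a n
  have hrad : ((1/2 : ℝ≥0) : ℝ≥0∞) ≤ p.radius := by
    apply FormalMultilinearSeries.le_radius_of_summable
    have h2 : Summable (fun k => ‖a k * (((1:ℝ)/2 : ℝ):ℂ)^k‖) :=
      (summable_norm_iff).2 (hs (1/2) ⟨by norm_num, by norm_num⟩)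
    refine h2.congr fun n => ?_
    rw [hpn]
    rw [norm_mul, norm_pow, Complex.norm_real]
    norm_num
  have hpos : (0:ℝ≥0∞) < p.radius := lt_of_lt_of_le (by norm_num) hrad
  have hball : HasFPowerSeriesOnBall p.sum p 0 ((1/2 : ℝ≥0) : ℝ≥0∞) :=
    (p.hasFPowerSeriesOnBall hpos).mono (by norm_num) hrad
  have hsumval : ∀ t : ℝ, t ∈ Set.Ioo (0:ℝ) 1 → p.sum (t:ℂ) = 0 := by
    intro t ht
    have : p.sum (t:ℂ) = ∑' k, a k * (t:ℂ)^k := by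
      refine tsum_congr fun n => ?_
      rw [FormalMultilinearSeries.ofScalars_apply_eq]
      simp [smul_eq_mul]
    rw [this, hz t ht]
  have hU : AnalyticOnNhd ℂ p.sum (Metric.ball (0:ℂ) (1/2 : ℝ)) := by
    have h := hball.analyticOnNhd
    rw [Metric.emetric_ball_nnreal] at h
    have e : ((1/2:ℝ≥0):ℝ) = (1/2:ℝ) := by norm_num
    rwa [e] at h
  have hEq : Set.EqOn p.sum 0 (Metric.ball (0:ℂ) (1/2 : ℝ)) := by
    apply hU.eqOn_zero_of_preconnected_of_frequently_eq_zero
      (Convex.isPreconnected (convex_ball _ _)) (z₀ := ((1/4 : ℝ) : ℂ))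
    · simp only [Metric.mem_ball, dist_zero_right]
      rw [Complex.norm_real]
      norm_num
    · have htend : Tendsto (fun n : ℕ => (((1/4 + 1/(n+5) : ℝ)) : ℂ)) atTop
          (nhdsWithin ((1/4:ℝ):ℂ) {((1/4:ℝ):ℂ)}ᶜ) := by
        apply tendsto_nhdsWithin_of_tendsto_nhds_of_eventually_within
        · have : Tendsto (fun n : ℕ => (1/4 + 1/(n+5) : ℝ)) atTop (nhds (1/4)) := by
            have h0 : Tendsto (fun n:ℕ => ((n:ℝ)+5)) atTop atTop :=
              tendsto_atTop_add_const_right _ 5 tendsto_natCast_atTop_atTop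
            have h1 : Tendsto (fun n : ℕ => (1/((n:ℝ)+5))) atTop (nhds 0) := by
              simpa [one_div, Function.comp_def] using tendsto_inv_atTop_zero.comp h0
            have := h1.const_add (1/4 : ℝ)
            simpa using this
          exact (Complex.continuous_ofReal.tendsto _).comp this
        · filter_upwards with n
          simp only [mem_compl_iff, mem_singleton_iff]
          intro h
          have := Complex.ofReal_injective h
          have hpos : (0:ℝ) < 1/((n:ℝ)+5) := by positivity
          linarith
      apply htend.frequently
      apply Frequently.of_forall
      intro n
      apply hsumval
      constructor
      · positivity
      · have h5 : (1:ℝ)/((n:ℝ)+5) ≤ 1/5 := by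
          apply div_le_div_of_nonneg_left <;> [norm_num; positivity; simp]
        linarith
  have hev : p.sum =ᶠ[nhds (0:ℂ)] 0 := by
    filter_upwards [Metric.ball_mem_nhds (0:ℂ) (by norm_num : (0:ℝ) < 1/2)] with z hz'
    exact hEq hz'
  have hp0 : p = 0 := hball.hasFPowerSeriesAt.eq_zero_of_eventually hev
  intro k
  have h2 : FormalMultilinearSeries.ofScalars ℂ a k = 0 := by
    have := congrFun hp0 k
    simpa [hp] using this
  rwa [FormalMultilinearSeries.ofScalars_eq_zero] at h2

/-- The Fourier-orthogonality step: extracting the diagonal `r - s = i0 - j0`. -/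
lemma fourier_step (c : ℕ × ℕ → ℂ)
    (hsum : ∀ z ∈ Metric.ball (0 : ℂ) 1,
      Summable (fun p : ℕ × ℕ => c p * z ^ p.1 * (starRingEnd ℂ z) ^ p.2))
    (hzero : ∀ z ∈ Metric.ball (0 : ℂ) 1,
      ∑' p : ℕ × ℕ, c p * z ^ p.1 * (starRingEnd ℂ z) ^ p.2 = 0)
    (i0 j0 : ℕ) (hij : i0 = 0 ∨ j0 = 0) {ρ : ℝ} (h0 : 0 < ρ) (h1 : ρ < 1) :
    ∑' k : ℕ, c (k + i0, k + j0) * (((ρ:ℂ))^2) ^ k = 0 := by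
  have hπ : (0:ℝ) < 2 * Real.pi := by positivity
  set n : ℤ := (i0:ℤ) - j0 with hn
  set μ : Measure ℝ := volume.restrict (Set.Ioc (0:ℝ) (2*Real.pi)) with hμ
  set f : ℕ × ℕ → ℝ → ℂ := fun p θ =>
    c p * (ρ:ℂ)^(p.1+p.2) * Complex.exp ((((p.1:ℤ) - p.2 - n : ℤ) : ℂ) * θ * Complex.I)
    with hf
  have hρball : ((ρ:ℝ):ℂ) ∈ Metric.ball (0:ℂ) 1 := by
    simp only [Metric.mem_ball, dist_zero_right, Complex.norm_real, Real.norm_eq_abs,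
      abs_of_pos h0]
    exact h1
  have hsg : Summable (fun p : ℕ × ℕ => c p * (ρ:ℂ)^(p.1+p.2)) := by
    refine (hsum _ hρball).congr fun p => ?_
    rw [Complex.conj_ofReal, pow_add, mul_assoc]
  have hsgn : Summable (fun p : ℕ × ℕ => ‖c p * (ρ:ℂ)^(p.1+p.2)‖) :=
    summable_norm_iff.2 hsg
  have hmeas : ∀ p : ℕ × ℕ, AEStronglyMeasurable (f p) μ := by
    intro p
    apply Continuous.aestronglyMeasurable
    apply Continuous.mul continuous_const
    apply Complex.continuous_exp.comp
    fun_prop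
  have hnorm : ∀ (p : ℕ × ℕ) (θ : ℝ), ‖f p θ‖ = ‖c p * (ρ:ℂ)^(p.1+p.2)‖ := by
    intro p θ
    rw [hf]
    simp only [norm_mul]
    rw [norm_exp_int_mul_I', mul_one]
  have hf' : (∑' p : ℕ × ℕ, ∫⁻ θ, ‖f p θ‖₊ ∂μ) ≠ ⊤ := by
    have heach : ∀ p : ℕ × ℕ, (∫⁻ θ, ‖f p θ‖₊ ∂μ)
        = (‖c p * (ρ:ℂ)^(p.1+p.2)‖₊ : ℝ≥0∞) * ENNReal.ofReal (2*Real.pi) := by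
      intro p
      have hcst : (fun θ => (‖f p θ‖₊ : ℝ≥0∞)) = fun _ => (‖c p * (ρ:ℂ)^(p.1+p.2)‖₊ : ℝ≥0∞) := by
        funext θ
        congr 1
        ext
        exact hnorm p θ
      rw [hcst, lintegral_const, hμ, Measure.restrict_apply_univ, Real.volume_Ioc]
      norm_num
    simp_rw [heach]
    rw [ENNReal.tsum_mul_right]
    apply ENNReal.mul_ne_top
    · rw [ENNReal.tsum_coe_ne_top_iff_summable]
      rw [← NNReal.summable_coe]
      exact hsgn.congr fun p => rfl
    · exact ENNReal.ofReal_ne_top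
  have hpt : ∀ θ : ℝ, ∑' p : ℕ × ℕ, f p θ = 0 := by
    intro θ
    set z : ℂ := ρ * Complex.exp (θ * Complex.I) with hzdef
    have hznorm : ‖z‖ = ρ := by
      rw [hzdef, norm_mul, Complex.norm_real, Real.norm_eq_abs, abs_of_pos h0,
        norm_exp_ofReal_mul_I', mul_one]
    have hzball : z ∈ Metric.ball (0:ℂ) 1 := by
      rw [Metric.mem_ball, dist_zero_right, hznorm]
      exact h1
    have hconj : (starRingEnd ℂ) z = ρ * Complex.exp (-(θ * Complex.I)) := by
      rw [hzdef, map_mul, Complex.conj_ofReal, ← Complex.exp_conj]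
      congr 2
      simp [Complex.conj_ofReal]
    have key : ∀ (m1 m2 : ℕ) (q A : ℂ),
        A * q^(m1+m2) * Complex.exp ((((m1:ℤ) - m2 - n : ℤ):ℂ) * θ * Complex.I)
        = (A * (q * Complex.exp ((θ:ℂ)*Complex.I)) ^ m1 *
            (q * Complex.exp (-((θ:ℂ)*Complex.I))) ^ m2) *
          Complex.exp (((-n : ℤ):ℂ) * ((θ:ℂ) * Complex.I)) := by
      intro m1 m2 q A
      have h3 : Complex.exp ((((m1:ℤ) - m2 - n : ℤ):ℂ) * θ * Complex.I)
          = Complex.exp ((m1:ℂ) * ((θ:ℂ)*Complex.I)) *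
            Complex.exp ((m2:ℂ) * -((θ:ℂ)*Complex.I)) *
            Complex.exp (((-n : ℤ):ℂ) * ((θ:ℂ) * Complex.I)) := by
        rw [← Complex.exp_add, ← Complex.exp_add]
        congr 1
        push_cast
        ring
      rw [mul_pow, mul_pow, ← Complex.exp_nat_mul, ← Complex.exp_nat_mul, h3, pow_add]
      ring
    have hterm : ∀ p : ℕ × ℕ, f p θ
        = (c p * z ^ p.1 * (starRingEnd ℂ z) ^ p.2) *
          Complex.exp (((-n : ℤ):ℂ) * ((θ:ℂ) * Complex.I)) := by
      intro p
      rw [hconj, hzdef, hf]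
      exact key p.1 p.2 (ρ:ℂ) (c p)
    rw [tsum_congr hterm, tsum_mul_right, hzero z hzball, zero_mul]
  have hswap := MeasureTheory.integral_tsum hmeas hf'
  simp only [hpt, integral_zero] at hswap
  have hint : ∀ p : ℕ × ℕ, (∫ θ, f p θ ∂μ)
      = c p * (ρ:ℂ)^(p.1+p.2) *
        (if ((p.1:ℤ) - p.2 - n : ℤ) = 0 then ((2*Real.pi : ℝ) : ℂ) else 0) := by
    intro p
    rw [hμ, ← intervalIntegral.integral_of_le hπ.le]
    rw [hf]
    simp only []
    rw [intervalIntegral.integral_const_mul]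
    rw [orth_aux]
  rw [tsum_congr hint] at hswap
  set g : ℕ × ℕ → ℂ := fun p =>
    c p * (ρ:ℂ)^(p.1+p.2) *
      (if ((p.1:ℤ) - p.2 - n : ℤ) = 0 then ((2*Real.pi : ℝ) : ℂ) else 0) with hg
  set e : ℕ → ℕ × ℕ := fun k => (k + i0, k + j0) with he
  have hinj : Function.Injective e := by
    intro k l hkl
    simpa [he, Prod.ext_iff] using hkl
  have hsupp : Function.support g ⊆ Set.range e := by
    intro p hp
    have hcond : ((p.1:ℤ) - p.2 - n : ℤ) = 0 := by
      by_contra hc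
      simp [hg, hc] at hp
    rw [hn] at hcond
    rcases hij with h | h
    · refine ⟨p.1, ?_⟩
      rw [he]
      have h2 : p.2 = p.1 + j0 := by omega
      simp only [h]
      rw [← h2]
      simp
    · refine ⟨p.2, ?_⟩
      rw [he]
      have h2 : p.1 = p.2 + i0 := by omega
      simp only [h]
      rw [← h2]
      simp
  have hre : ∑' k : ℕ, g (e k) = ∑' p : ℕ × ℕ, g p := hinj.tsum_eq hsupp
  have hgek : ∀ k : ℕ, g (e k)
      = (c (k + i0, k + j0) * (((ρ:ℂ))^2) ^ k) * ((ρ:ℂ)^(i0+j0) * ((2*Real.pi : ℝ) : ℂ)) := by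
    intro k
    rw [hg, he]
    simp only []
    rw [if_pos (by rw [hn]; push_cast; ring)]
    rw [show (k + i0) + (k + j0) = 2*k + (i0+j0) by ring, pow_add, pow_mul]
    ring
  rw [← hre, tsum_congr hgek, tsum_mul_right] at hswap
  have hC : ((ρ:ℂ)^(i0+j0) * ((2*Real.pi : ℝ) : ℂ)) ≠ 0 := by
    apply mul_ne_zero
    · apply pow_ne_zero
      simp only [ne_eq, Complex.ofReal_eq_zero]
      exact h0.ne'
    · simp only [ne_eq, Complex.ofReal_eq_zero]
      positivity
  exact (mul_eq_zero.mp hswap.symm).resolve_right hC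

/-- Uniqueness of absolutely convergent power series expansions in `z` and
`conj z` on the open unit disk: if `∑ c(r,s) zʳ (conj z)ˢ` is summable with sum `0` for
every `z` in the disk, then all coefficients vanish. -/
theorem stmt1 (c : ℕ × ℕ → ℂ)
    (hsum : ∀ z ∈ Metric.ball (0 : ℂ) 1,
      Summable (fun p : ℕ × ℕ => c p * z ^ p.1 * (starRingEnd ℂ z) ^ p.2))
    (hzero : ∀ z ∈ Metric.ball (0 : ℂ) 1,
      ∑' p : ℕ × ℕ, c p * z ^ p.1 * (starRingEnd ℂ z) ^ p.2 = 0) :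
    ∀ p : ℕ × ℕ, c p = 0 := by
  rintro ⟨i, j⟩
  set m : ℕ := min i j with hm
  set i0 : ℕ := i - m with hi0
  set j0 : ℕ := j - m with hj0
  have hij : i0 = 0 ∨ j0 = 0 := by omega
  have he : ∀ k : ℕ, Function.Injective (fun k : ℕ => ((k + i0, k + j0) : ℕ × ℕ)) := by
    intro _ k l hkl
    simpa [Prod.ext_iff] using hkl
  have hA : ∀ k, c (k + i0, k + j0) = 0 := by
    apply lemA
    · -- summability
      intro t ht
      set ρ : ℝ := Real.sqrt t with hρ
      have h0 : 0 < ρ := Real.sqrt_pos.2 ht.1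
      have h1 : ρ < 1 := by
        rw [hρ]
        rw [show (1:ℝ) = Real.sqrt 1 by simp]
        exact Real.sqrt_lt_sqrt ht.1.le ht.2
      have hρ2 : ((ρ:ℝ):ℂ)^2 = (t:ℂ) := by
        rw [← Complex.ofReal_pow, Real.sq_sqrt ht.1.le]
      have hρball : ((ρ:ℝ):ℂ) ∈ Metric.ball (0:ℂ) 1 := by
        simp only [Metric.mem_ball, dist_zero_right, Complex.norm_real, Real.norm_eq_abs,
          abs_of_pos h0]
        exact h1
      have hsg : Summable (fun p : ℕ × ℕ => c p * (ρ:ℂ)^(p.1+p.2)) := by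
        refine (hsum _ hρball).congr fun p => ?_
        rw [Complex.conj_ofReal, pow_add, mul_assoc]
      have hcomp : Summable (fun k : ℕ =>
          (c (k + i0, k + j0) * (t:ℂ)^k) * (ρ:ℂ)^(i0+j0)) := by
        refine (hsg.comp_injective (he 0)).congr fun k => ?_
        simp only [Function.comp]
        rw [show (k + i0) + (k + j0) = 2*k + (i0+j0) by ring, pow_add, pow_mul, hρ2]
        ring
      have hCne : ((ρ:ℂ))^(i0+j0) ≠ 0 := by
        apply pow_ne_zero
        simp only [ne_eq, Complex.ofReal_eq_zero]
        exact h0.ne'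
      exact (summable_mul_right_iff hCne).mp hcomp
    · -- vanishing sums
      intro t ht
      set ρ : ℝ := Real.sqrt t with hρ
      have h0 : 0 < ρ := Real.sqrt_pos.2 ht.1
      have h1 : ρ < 1 := by
        rw [hρ]
        rw [show (1:ℝ) = Real.sqrt 1 by simp]
        exact Real.sqrt_lt_sqrt ht.1.le ht.2
      have hρ2 : ((ρ:ℝ):ℂ)^2 = (t:ℂ) := by
        rw [← Complex.ofReal_pow, Real.sq_sqrt ht.1.le]
      have := fourier_step c hsum hzero i0 j0 hij h0 h1
      rwa [hρ2] at this
  have hfin := hA m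
  have hi : m + i0 = i := by omega
  have hj : m + j0 = j := by omega
  rwa [hi, hj] at hfin
end

section
/- Let n ≥ 1, let H be an n × n Hermitian matrix over ℂ, and let f₁, …, fₙ be holomorphic functions on the open unit disk {z ∈ ℂ : |z| < 1} that are linearly independent over ℂ as functions on the disk. If ∑_{j,k} H_{jk} · f_j(z) · conj(f_k(z)) = 0 for every z in the open unit disk, then H = 0. -/
open Finset Metric

/-- One `∂/∂z̄` step: if `∑ gₖ conj(Fₖ) = 0` on an open set with `gₖ, Fₖ` holomorphic,
then `∑ gₖ conj(Fₖ') = 0` there. -/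
private lemma stmt2_deriv_step {n : ℕ} {g F : Fin n → ℂ → ℂ} {s : Set ℂ} (hs : IsOpen s)
    (hg : ∀ k, DifferentiableOn ℂ (g k) s) (hF : ∀ k, DifferentiableOn ℂ (F k) s)
    (h0 : ∀ z ∈ s, ∑ k, g k z * starRingEnd ℂ (F k z) = 0) :
    ∀ z ∈ s, ∑ k, g k z * starRingEnd ℂ (deriv (F k) z) = 0 := by
  intro z hz
  have hgz : ∀ k, HasDerivAt (g k) (deriv (g k) z) z := fun k =>
    ((hg k).differentiableAt (hs.mem_nhds hz)).hasDerivAt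
  have hFz : ∀ k, HasDerivAt (F k) (deriv (F k) z) z := fun k =>
    ((hF k).differentiableAt (hs.mem_nhds hz)).hasDerivAt
  set L : Fin n → (ℂ →L[ℝ] ℂ) := fun k =>
    g k z • (Complex.conjCLE.toContinuousLinearMap.comp
        (((1 : ℂ →L[ℂ] ℂ).smulRight (deriv (F k) z)).restrictScalars ℝ)) +
      (starRingEnd ℂ (F k z)) •
        (((1 : ℂ →L[ℂ] ℂ).smulRight (deriv (g k) z)).restrictScalars ℝ) with hL
  have hterm : ∀ k, HasFDerivAt (fun w => g k w * starRingEnd ℂ (F k w)) (L k) z := by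
    intro k
    have h1 : HasFDerivAt (g k)
        (((1 : ℂ →L[ℂ] ℂ).smulRight (deriv (g k) z)).restrictScalars ℝ) z :=
      ((hgz k).hasFDerivAt).restrictScalars ℝ
    have h2 : HasFDerivAt (fun w => starRingEnd ℂ (F k w))
        (Complex.conjCLE.toContinuousLinearMap.comp
          (((1 : ℂ →L[ℂ] ℂ).smulRight (deriv (F k) z)).restrictScalars ℝ)) z :=
      (Complex.conjCLE.toContinuousLinearMap.hasFDerivAt).comp z
        (((hFz k).hasFDerivAt).restrictScalars ℝ)
    exact h1.mul h2
  have hsum : HasFDerivAt (fun w => ∑ k, g k w * starRingEnd ℂ (F k w)) (∑ k, L k) z :=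
    HasFDerivAt.fun_sum fun k _ => hterm k
  have hzero : (fun w => ∑ k, g k w * starRingEnd ℂ (F k w)) =ᶠ[nhds z] (fun _ => (0 : ℂ)) := by
    filter_upwards [hs.mem_nhds hz] with w hw using h0 w hw
  have hL0 : (∑ k, L k) = 0 := by
    have hz0 : HasFDerivAt (fun w => ∑ k, g k w * starRingEnd ℂ (F k w))
        (0 : ℂ →L[ℝ] ℂ) z :=
      (hasFDerivAt_const (0 : ℂ) z).congr_of_eventuallyEq hzero
    exact hsum.unique hz0
  -- evaluate the vanishing derivative at `1` and `I`
  have key : ∀ v : ℂ,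
      (starRingEnd ℂ v) * (∑ k, g k z * starRingEnd ℂ (deriv (F k) z)) +
        v * (∑ k, starRingEnd ℂ (F k z) * deriv (g k) z) = 0 := by
    intro v
    have := congrArg (fun T : ℂ →L[ℝ] ℂ => T v) hL0
    simp only [ContinuousLinearMap.sum_apply, hL, ContinuousLinearMap.add_apply,
      ContinuousLinearMap.smul_apply, ContinuousLinearMap.comp_apply,
      ContinuousLinearMap.coe_restrictScalars', ContinuousLinearMap.smulRight_apply,
      ContinuousLinearMap.one_apply, ContinuousLinearEquiv.coe_coe, Complex.conjCLE_apply,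
      ContinuousLinearMap.zero_apply, smul_eq_mul] at this
    rw [Finset.mul_sum, Finset.mul_sum, ← Finset.sum_add_distrib, ← this]
    congr 1
    ext k
    simp only [map_mul, Complex.conj_conj]
    ring
  have h1 := key 1
  have h2 := key Complex.I
  rw [map_one, one_mul, one_mul] at h1
  rw [Complex.conj_I] at h2
  have hI : Complex.I * Complex.I = -1 := Complex.I_mul_I
  set Q := ∑ k, g k z * starRingEnd ℂ (deriv (F k) z)
  set P := ∑ k, starRingEnd ℂ (F k z) * deriv (g k) z
  linear_combination h1 / 2 + Complex.I / 2 * h2 + (Q - P) / 2 * hI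

/-- Iterated version: `∑ gₖ conj(fₖ^{(m)}) = 0` for all `m`. -/
private lemma stmt2_iter_step {n : ℕ} {g f : Fin n → ℂ → ℂ} {s : Set ℂ} (hs : IsOpen s)
    (hg : ∀ k, DifferentiableOn ℂ (g k) s) (hf : ∀ k, DifferentiableOn ℂ (f k) s)
    (h0 : ∀ z ∈ s, ∑ k, g k z * starRingEnd ℂ (f k z) = 0) (m : ℕ) :
    ∀ z ∈ s, ∑ k, g k z * starRingEnd ℂ (deriv^[m] (f k) z) = 0 := by
  have hAn : ∀ k m, AnalyticOnNhd ℂ (deriv^[m] (f k)) s := by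
    intro k m
    induction m with
    | zero => exact (Complex.analyticOnNhd_iff_differentiableOn hs).2 (hf k)
    | succ m ih =>
      have : deriv^[m + 1] (f k) = deriv (deriv^[m] (f k)) := Function.iterate_succ_apply' _ _ _
      rw [this]
      exact ih.deriv
  induction m with
  | zero => simpa using h0
  | succ m ih =>
    intro z hz
    have := stmt2_deriv_step hs hg (fun k => (hAn k m).differentiableOn) ih z hz
    have hrw : ∀ k, deriv^[m + 1] (f k) z = deriv (deriv^[m] (f k)) z := by
      intro k
      rw [Function.iterate_succ_apply']
    simpa only [hrw] using this

/-- If `∑ gₖ conj(fₖ) = 0` on the unit ball with `fₖ` linearly independent,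
then each `gₖ` vanishes on the ball. -/
private lemma stmt2_comb_zero {n : ℕ} {f : Fin n → ℂ → ℂ}
    (hf : ∀ j, DifferentiableOn ℂ (f j) (Metric.ball (0 : ℂ) 1))
    (hind : LinearIndependent ℂ (fun j : Fin n => fun z : Metric.ball (0 : ℂ) 1 => f j z.1))
    {g : Fin n → ℂ → ℂ} (hg : ∀ k, DifferentiableOn ℂ (g k) (Metric.ball (0 : ℂ) 1))
    (h0 : ∀ z ∈ Metric.ball (0 : ℂ) 1, ∑ k, g k z * starRingEnd ℂ (f k z) = 0) :
    ∀ z ∈ Metric.ball (0 : ℂ) 1, ∀ k, g k z = 0 := by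
  have hs : IsOpen (Metric.ball (0 : ℂ) 1) := isOpen_ball
  intro z₀ hz₀ k₀
  set c : Fin n → ℂ := fun k => starRingEnd ℂ (g k z₀) with hc
  set h : ℂ → ℂ := fun z => ∑ k, c k * f k z with hh
  have hdh : DifferentiableOn ℂ h (Metric.ball (0 : ℂ) 1) := by
    apply DifferentiableOn.fun_sum
    intro k _
    exact (hf k).const_smul (c k)
  -- iterated derivatives of `h` agree with the corresponding combinations
  have hAn : ∀ k m, AnalyticOnNhd ℂ (deriv^[m] (f k)) (Metric.ball (0 : ℂ) 1) := by
    intro k m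
    induction m with
    | zero => exact (Complex.analyticOnNhd_iff_differentiableOn hs).2 (hf k)
    | succ m ih =>
      have : deriv^[m + 1] (f k) = deriv (deriv^[m] (f k)) := Function.iterate_succ_apply' _ _ _
      rw [this]
      exact ih.deriv
  have hEq : ∀ m, Set.EqOn (deriv^[m] h)
      (fun z => ∑ k, c k * deriv^[m] (f k) z) (Metric.ball (0 : ℂ) 1) := by
    intro m
    induction m with
    | zero => intro z _; simp [hh]
    | succ m ih =>
      intro z hz
      have h1 : deriv^[m + 1] h z = deriv (deriv^[m] h) z := by
        rw [Function.iterate_succ_apply']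
      have h2 : deriv (deriv^[m] h) z =
          deriv (fun z => ∑ k, c k * deriv^[m] (f k) z) z := by
        apply Filter.EventuallyEq.deriv_eq
        filter_upwards [hs.mem_nhds hz] with w hw using ih hw
      have h3 : deriv (fun z => ∑ k, c k * deriv^[m] (f k) z) z =
          ∑ k, c k * deriv (deriv^[m] (f k)) z := by
        rw [deriv_fun_sum]
        · congr 1
          ext k
          exact deriv_const_mul (c k) ((hAn k m z hz).differentiableAt)
        · intro k _
          exact ((hAn k m z hz).differentiableAt).const_mul (c k)
      rw [h1, h2, h3]
      congr 1
      ext k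
      rw [Function.iterate_succ_apply']
  have hiterzero : ∀ m, iteratedDeriv m h z₀ = 0 := by
    intro m
    have hval := stmt2_iter_step hs hg hf h0 m z₀ hz₀
    have : deriv^[m] h z₀ = ∑ k, c k * deriv^[m] (f k) z₀ := hEq m hz₀
    rw [iteratedDeriv_eq_iterate, this]
    calc ∑ k, c k * deriv^[m] (f k) z₀
        = starRingEnd ℂ (∑ k, g k z₀ * starRingEnd ℂ (deriv^[m] (f k) z₀)) := by
          rw [map_sum]
          congr 1
          ext k
          simp [hc, map_mul]
      _ = 0 := by rw [hval, map_zero]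
  -- h vanishes near z₀ by Taylor series
  set r : ℝ := 1 - dist z₀ 0 with hr
  have hrpos : 0 < r := by
    have : dist z₀ 0 < 1 := mem_ball.mp hz₀
    linarith
  have hsub : Metric.ball z₀ r ⊆ Metric.ball (0 : ℂ) 1 := by
    apply Metric.ball_subset_ball'
    simp [hr]
  have hhball : DifferentiableOn ℂ h (Metric.ball z₀ r) := hdh.mono hsub
  have hnear : Set.EqOn h 0 (Metric.ball z₀ r) := by
    intro z hz
    have := Complex.taylorSeries_eq_on_ball' hz hhball
    simp only [hiterzero, mul_zero, zero_mul, tsum_zero] at this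
    exact this.symm
  have hev : h =ᶠ[nhds z₀] 0 := by
    filter_upwards [isOpen_ball.mem_nhds (mem_ball_self hrpos)] with w hw using hnear hw
  -- identity theorem
  have hanal : AnalyticOnNhd ℂ h (Metric.ball (0 : ℂ) 1) :=
    (Complex.analyticOnNhd_iff_differentiableOn hs).2 hdh
  have hzero : Set.EqOn h 0 (Metric.ball (0 : ℂ) 1) :=
    hanal.eqOn_zero_of_preconnected_of_eventuallyEq_zero
      (convex_ball (0 : ℂ) 1).isPreconnected hz₀ hev
  -- linear independence forces c = 0
  have hc0 : ∀ k, c k = 0 := by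
    have := (Fintype.linearIndependent_iff.mp hind) c ?_
    · exact this
    · funext z
      have : h z.1 = 0 := hzero z.2
      simpa [hh, smul_eq_mul] using this
  have := hc0 k₀
  rw [hc] at this
  simpa using congrArg (starRingEnd ℂ) this

/-- If `H` is an `n × n` Hermitian matrix (`n ≥ 1`) and `f₁,…,fₙ` are holomorphic
and linearly independent on the open unit disk with `∑_{j,k} H_{jk} f_j(z) conj(f_k(z)) = 0`
for every `z` in the disk, then `H = 0`. -/
theorem stmt2 (n : ℕ) (hn : 1 ≤ n) (H : Matrix (Fin n) (Fin n) ℂ)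
    (hH : H.IsHermitian)
    (f : Fin n → ℂ → ℂ)
    (hf : ∀ j, DifferentiableOn ℂ (f j) (Metric.ball (0 : ℂ) 1))
    (hind : LinearIndependent ℂ (fun j : Fin n => fun z : Metric.ball (0 : ℂ) 1 => f j z.1))
    (heq : ∀ z ∈ Metric.ball (0 : ℂ) 1,
      ∑ j, ∑ k, H j k * f j z * starRingEnd ℂ (f k z) = 0) :
    H = 0 := by
  set g : Fin n → ℂ → ℂ := fun k z => ∑ j, H j k * f j z with hgdef
  have hg : ∀ k, DifferentiableOn ℂ (g k) (Metric.ball (0 : ℂ) 1) := by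
    intro k
    apply DifferentiableOn.fun_sum
    intro j _
    exact (hf j).const_smul (H j k)
  have h0 : ∀ z ∈ Metric.ball (0 : ℂ) 1, ∑ k, g k z * starRingEnd ℂ (f k z) = 0 := by
    intro z hz
    have := heq z hz
    rw [← this, Finset.sum_comm]
    congr 1
    ext k
    rw [hgdef]
    simp only [Finset.sum_mul]
  have hgz : ∀ z ∈ Metric.ball (0 : ℂ) 1, ∀ k, g k z = 0 :=
    stmt2_comb_zero hf hind hg h0
  ext j k
  have hcol : ∀ i, H i k = 0 := by
    apply (Fintype.linearIndependent_iff.mp hind) (fun i => H i k)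
    funext z
    have : g k z.1 = 0 := hgz z.1 z.2 k
    simpa [hgdef, smul_eq_mul] using this
  simpa using hcol j
end
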